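/- For any crossed module (H, G, μ), there exists a surjective homomorphism from the second Baues–Ellis homology H₂(H, G, μ) onto the second integral group homology H₂(G/μ(H)). -/

import Mathlib

/-- A crossed module `(H, G, mu)`: a group homomorphism together with an
action of `G` on `H` by automorphisms, satisfying the precrossed module identity and
the Peiffer identity. -/
structure CrossedModule (H G : Type) [Group H] [Group G] where
  μ : H →* G
  act : G →* MulAut H
  pre : ∀ (g : G) (h : H), μ (act g h) = g * μ h * g⁻¹
  peiffer : ∀ h h' : H, act (μ h) h' = h * h' * h⁻¹

/-- The `n`-th level of the nerve of a crossed module `(H, G, μ)`, realised as the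
set `(Fin n → H) × G` (iterated semidirect product `H ⋊ (⋯(H ⋊ G)⋯)`). -/
abbrev NerveLvl (H G : Type) (n : ℕ) : Type := (Fin n → H) × G

variable {H G : Type} [Group H] [Group G]

/-- The "twisting" element `μ(h_{i+2})⋯μ(h_n)·g` of `G` by which the `(i+1)`-st
semidirect factor of `H` is acted on in the iterated semidirect product. -/
def nerveTwist (X : CrossedModule H G) {n : ℕ} (a : Fin n → H) (g : G) (i : Fin n) : G :=
  (((List.ofFn a).drop ((i : ℕ) + 1)).map X.μ).prod * g

/-- Multiplication of the iterated semidirect product `H ⋊ (⋯(H ⋊ G)⋯)`. -/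
def nerveMul (X : CrossedModule H G) {n : ℕ} (x y : NerveLvl H G n) : NerveLvl H G n :=
  (fun i => x.1 i * X.act (nerveTwist X x.1 x.2 i) (y.1 i), x.2 * y.2)

/-- The face maps of the nerve of a crossed module. -/
def nerveFace (X : CrossedModule H G) (n : ℕ)
    (i : Fin (n + 2)) (x : NerveLvl H G (n + 1)) : NerveLvl H G n :=
  (fun j : Fin n =>
      if (j : ℕ) + 1 < (i : ℕ) then x.1 j.castSucc
      else if (j : ℕ) + 1 = (i : ℕ) then x.1 j.castSucc * x.1 j.succ
      else x.1 j.succ,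
   if (i : ℕ) = n + 1 then X.μ (x.1 (Fin.last n)) * x.2 else x.2)

/-- Face maps of the nerve of a (multiplicative) structure `K`: the standard
simplicial-set faces of the classifying space, for any binary operation `m`. -/
def barFace {K : Type} (m : K → K → K) {q : ℕ} (i : Fin (q + 2))
    (f : Fin (q + 1) → K) (j : Fin q) : K :=
  if (j : ℕ) + 1 < (i : ℕ) then f j.castSucc
  else if (j : ℕ) + 1 = (i : ℕ) then m (f j.castSucc) (f j.succ)
  else f j.succ

/-- The `n`-simplices of the diagonal of the bisimplicial set obtained by taking the
(ordinary) nerve of the group `Nerveₙ(H, G, μ)` in each simplicial dimension. -/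
abbrev DiagNerve (H G : Type) (n : ℕ) : Type := Fin n → NerveLvl H G n

/-- The face maps of the diagonal simplicial set. -/
def diagFace (X : CrossedModule H G) (n : ℕ) (i : Fin (n + 2))
    (f : DiagNerve H G (n + 1)) : DiagNerve H G n :=
  fun j => nerveFace X n i (barFace (nerveMul X) i f j)

/-- The chain group of `ℤ`-chains on the diagonal in dimension `n`. -/
abbrev BEChain (H G : Type) (n : ℕ) : Type := FreeAbelianGroup (DiagNerve H G n)

/-- The simplicial boundary map: the alternating sum of the face maps. -/
def beBoundary (X : CrossedModule H G) (n : ℕ) :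
    BEChain H G (n + 1) →+ BEChain H G n :=
  ∑ i : Fin (n + 2), ((-1 : ℤ) ^ (i : ℕ)) • FreeAbelianGroup.map (diagFace X n i)

/-- The cycles of the Baues–Ellis chain complex. -/
def beCycles (X : CrossedModule H G) : (n : ℕ) → AddSubgroup (BEChain H G n)
  | 0 => ⊤
  | (m + 1) => (beBoundary X m).ker

/-- The Baues–Ellis homology (with integral coefficients) of a crossed module:
the homology of the `ℤ`-chains on the diagonal of the bisimplicial nerve. -/
def BEHomology (X : CrossedModule H G) (n : ℕ) : Type :=
  beCycles X n ⧸ ((beBoundary X n).range.addSubgroupOf (beCycles X n))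

noncomputable instance (X : CrossedModule H G) (n : ℕ) :
    AddCommGroup (BEHomology X n) :=
  QuotientAddGroup.Quotient.addCommGroup _

/-- Chains of the bar complex computing the integral homology of a group `Q`. -/
abbrev GrpChain (Q : Type) (n : ℕ) : Type := FreeAbelianGroup (Fin n → Q)

/-- The bar boundary map for the integral homology of a group. -/
def grpBoundary (Q : Type) [Group Q] (n : ℕ) : GrpChain Q (n + 1) →+ GrpChain Q n :=
  ∑ i : Fin (n + 2), ((-1 : ℤ) ^ (i : ℕ)) •
    FreeAbelianGroup.map (fun f => barFace (fun a b => a * b) i f)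

/-- The cycles of the bar complex. -/
def grpCycles (Q : Type) [Group Q] : (n : ℕ) → AddSubgroup (GrpChain Q n)
  | 0 => ⊤
  | (m + 1) => (grpBoundary Q m).ker

/-- The integral homology of the group `Q` (the homology of `ℤ` applied to the nerve
of `Q`, i.e. the homology of the classifying space `BQ`). -/
def GrpHomology (Q : Type) [Group Q] (n : ℕ) : Type :=
  grpCycles Q n ⧸ ((grpBoundary Q n).range.addSubgroupOf (grpCycles Q n))

noncomputable instance (Q : Type) [Group Q] (n : ℕ) : AddCommGroup (GrpHomology Q n) :=
  QuotientAddGroup.Quotient.addCommGroup _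

instance crossedModule_range_normal' {H G : Type} [Group H] [Group G]
    (X : CrossedModule H G) : X.μ.range.Normal := by
  constructor
  rintro x ⟨h, rfl⟩ g
  exact ⟨X.act g h, X.pre g h⟩


section AuxProof

variable {H G : Type} [Group H] [Group G]

/-- Projection of a diagonal simplex to a bar simplex of the quotient group. -/
def pObj (X : CrossedModule H G) (n : ℕ) (f : DiagNerve H G n) :
    Fin n → G ⧸ X.μ.range := fun j => QuotientGroup.mk' X.μ.range (f j).2

lemma mk'_nerveFace (X : CrossedModule H G) (n : ℕ) (i : Fin (n + 2))
    (x : NerveLvl H G (n + 1)) :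
    QuotientGroup.mk' X.μ.range (nerveFace X n i x).2
      = QuotientGroup.mk' X.μ.range x.2 := by
  show QuotientGroup.mk' X.μ.range (if (i : ℕ) = n + 1 then X.μ (x.1 (Fin.last n)) * x.2 else x.2) = _
  split_ifs with h
  · rw [map_mul]
    have h1 : QuotientGroup.mk' X.μ.range (X.μ (x.1 (Fin.last n))) = 1 := by
      rw [QuotientGroup.mk'_apply, QuotientGroup.eq_one_iff]
      exact ⟨_, rfl⟩
    rw [h1, one_mul]
  · rfl

lemma pObj_diagFace (X : CrossedModule H G) (n : ℕ) (i : Fin (n + 2))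
    (f : DiagNerve H G (n + 1)) :
    pObj X n (diagFace X n i f)
      = barFace (fun a b => a * b) i (pObj X (n + 1) f) := by
  funext j
  show QuotientGroup.mk' X.μ.range
      ((nerveFace X n i (barFace (nerveMul X) i f j)).2) = _
  rw [mk'_nerveFace]
  unfold barFace
  split_ifs with h1 h2
  · rfl
  · show QuotientGroup.mk' X.μ.range ((f j.castSucc).2 * (f j.succ).2) = _
    rw [map_mul]; rfl
  · rfl

lemma pChain_comm (X : CrossedModule H G) (n : ℕ) (x : BEChain H G (n + 1)) :
    FreeAbelianGroup.map (pObj X n) (beBoundary X n x)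
      = grpBoundary (G ⧸ X.μ.range) n (FreeAbelianGroup.map (pObj X (n + 1)) x) := by
  have key : (FreeAbelianGroup.map (pObj X n)).comp (beBoundary X n)
      = (grpBoundary (G ⧸ X.μ.range) n).comp (FreeAbelianGroup.map (pObj X (n + 1))) := by
    apply FreeAbelianGroup.lift_ext
    intro f
    simp only [AddMonoidHom.comp_apply, beBoundary, grpBoundary,
      AddMonoidHom.finset_sum_apply, AddMonoidHom.smul_apply, map_sum, map_zsmul,
      FreeAbelianGroup.map_of_apply, pObj_diagFace]
  exact DFunLike.congr_fun key x

end AuxProof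

section LiftAux

variable {H G : Type} [Group H] [Group G]

/-- A set-theoretic section of the quotient map. -/
noncomputable def secQ (X : CrossedModule H G) (q : G ⧸ X.μ.range) : G := q.out

lemma secQ_spec (X : CrossedModule H G) (q : G ⧸ X.μ.range) :
    QuotientGroup.mk' X.μ.range (secQ X q) = q := QuotientGroup.out_eq' q

lemma defect_mem (X : CrossedModule H G) (q1 q2 : G ⧸ X.μ.range) :
    secQ X q1 * secQ X q2 * (secQ X (q1 * q2))⁻¹ ∈ X.μ.range := by
  have h : QuotientGroup.mk' X.μ.range
      (secQ X q1 * secQ X q2 * (secQ X (q1 * q2))⁻¹) = 1 := by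
    rw [map_mul, map_mul, map_inv, secQ_spec, secQ_spec, secQ_spec]
    group
  rw [QuotientGroup.mk'_apply] at h
  exact (QuotientGroup.eq_one_iff _).mp h

/-- A chosen `μ`-preimage of the 2-cocycle defect of the section. -/
noncomputable def defectH (X : CrossedModule H G) (q1 q2 : G ⧸ X.μ.range) : H :=
  (MonoidHom.mem_range.mp (defect_mem X q1 q2)).choose

lemma defectH_spec (X : CrossedModule H G) (q1 q2 : G ⧸ X.μ.range) :
    X.μ (defectH X q1 q2) = secQ X q1 * secQ X q2 * (secQ X (q1 * q2))⁻¹ :=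
  (MonoidHom.mem_range.mp (defect_mem X q1 q2)).choose_spec

/-- Lift of a bar 1-simplex. -/
noncomputable def lift1 (X : CrossedModule H G) (q : Fin 1 → G ⧸ X.μ.range) :
    DiagNerve H G 1 :=
  fun _ => (fun _ => (1 : H), secQ X (q 0))

/-- Lift of a bar 2-simplex, corrected so that it commutes with all three faces. -/
noncomputable def lift2 (X : CrossedModule H G) (q : Fin 2 → G ⧸ X.μ.range) :
    DiagNerve H G 2 :=
  ![(![1, defectH X (q 0) (q 1)],
      (X.μ (defectH X (q 0) (q 1)))⁻¹ * secQ X (q 0)),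
    (![X.act ((secQ X (q 0))⁻¹) (defectH X (q 0) (q 1))⁻¹, 1],
      secQ X (q 1))]

lemma face_lift2 (X : CrossedModule H G) (q : Fin 2 → G ⧸ X.μ.range) (i : Fin 3) :
    diagFace X 1 i (lift2 X q) = lift1 X (barFace (fun a b => a * b) i q) := by
  have hd := defectH_spec X (q 0) (q 1)
  fin_cases i <;>
  · funext j
    fin_cases j
    refine Prod.ext ?_ ?_ <;>
      simp only [diagFace, nerveFace, barFace, nerveMul, nerveTwist, lift1, lift2] <;>
      simp [List.ofFn_succ] <;>
      first
        | (funext x; fin_cases x;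
           simp [map_inv, MulAut.apply_inv_self])
        | (simp [Fin.last, hd]; group)

end LiftAux

section Assemble

variable {H G : Type} [Group H] [Group G]

lemma mk'_mu (X : CrossedModule H G) (h : H) :
    QuotientGroup.mk' X.μ.range (X.μ h) = 1 := by
  rw [QuotientGroup.mk'_apply, QuotientGroup.eq_one_iff]
  exact ⟨_, rfl⟩

lemma coe_mu (X : CrossedModule H G) (h : H) :
    ((X.μ h : G) : G ⧸ X.μ.range) = 1 :=
  (QuotientGroup.eq_one_iff _).mpr ⟨_, rfl⟩

lemma coe_secQ (X : CrossedModule H G) (q : G ⧸ X.μ.range) :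
    ((secQ X q : G) : G ⧸ X.μ.range) = q := QuotientGroup.out_eq' q

lemma pObj_lift2 (X : CrossedModule H G) (q : Fin 2 → G ⧸ X.μ.range) :
    pObj X 2 (lift2 X q) = q := by
  funext j
  fin_cases j <;> simp [pObj, lift2, map_mul, map_inv, mk'_mu, secQ_spec, coe_mu, coe_secQ]

lemma bound_lift2 (X : CrossedModule H G) (z : GrpChain (G ⧸ X.μ.range) 2) :
    beBoundary X 1 (FreeAbelianGroup.map (lift2 X) z)
      = FreeAbelianGroup.map (lift1 X) (grpBoundary (G ⧸ X.μ.range) 1 z) := by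
  have key : (beBoundary X 1).comp (FreeAbelianGroup.map (lift2 X))
      = (FreeAbelianGroup.map (lift1 X)).comp (grpBoundary (G ⧸ X.μ.range) 1) := by
    apply FreeAbelianGroup.lift_ext
    intro f
    simp only [AddMonoidHom.comp_apply, beBoundary, grpBoundary,
      AddMonoidHom.finset_sum_apply, AddMonoidHom.smul_apply, map_sum, map_zsmul,
      FreeAbelianGroup.map_of_apply, face_lift2]
  exact DFunLike.congr_fun key z

lemma hker_aux (X : CrossedModule H G) (x : BEChain H G 2) (hx : x ∈ beCycles X 2) :
    FreeAbelianGroup.map (pObj X 2) x ∈ grpCycles (G ⧸ X.μ.range) 2 := by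
  have hx' : beBoundary X 1 x = 0 := hx
  show grpBoundary (G ⧸ X.μ.range) 1 (FreeAbelianGroup.map (pObj X 2) x) = 0
  rw [← pChain_comm X 1 x, hx', map_zero]

/-- The cycle-level map. -/
noncomputable def cycMap (X : CrossedModule H G) :
    ↥(beCycles X 2) →+ ↥(grpCycles (G ⧸ X.μ.range) 2) where
  toFun x := ⟨FreeAbelianGroup.map (pObj X 2) x.1, hker_aux X x.1 x.2⟩
  map_zero' := Subtype.ext (map_zero _)
  map_add' _ _ := Subtype.ext (map_add _ _ _)

end Assemble

/-- For any crossed module `(H, G, μ)` there is a surjective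
homomorphism from the second Baues–Ellis homology `H₂(H, G, μ)` onto the second
integral group homology `H₂(G/μ(H))`. -/
theorem second_homology_surjection {H G : Type} [Group H] [Group G]
    (X : CrossedModule H G) :
    ∃ φ : BEHomology X 2 →+ GrpHomology (G ⧸ X.μ.range) 2,
      Function.Surjective φ := by
  classical
  set Q := G ⧸ X.μ.range with hQ
  let ψ : ↥(beCycles X 2) →+ GrpHomology Q 2 :=
    (QuotientAddGroup.mk' ((grpBoundary Q 2).range.addSubgroupOf
        (grpCycles Q 2))).comp (cycMap X)
  have hle : ((beBoundary X 2).range.addSubgroupOf (beCycles X 2)) ≤ ψ.ker := by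
    intro x hx
    rw [AddSubgroup.mem_addSubgroupOf] at hx
    obtain ⟨y, hy⟩ := hx
    rw [AddMonoidHom.mem_ker]
    show QuotientAddGroup.mk' _ (cycMap X x) = 0
    rw [QuotientAddGroup.mk'_apply, QuotientAddGroup.eq_zero_iff,
      AddSubgroup.mem_addSubgroupOf]
    exact ⟨FreeAbelianGroup.map (pObj X 3) y, by rw [← pChain_comm X 2 y, hy]; rfl⟩
  refine ⟨QuotientAddGroup.lift _ ψ hle, ?_⟩
  intro c
  obtain ⟨zc, rfl⟩ := QuotientAddGroup.mk_surjective c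
  have hz : grpBoundary Q 1 zc.1 = 0 := zc.2
  have hw : FreeAbelianGroup.map (lift2 X) zc.1 ∈ beCycles X 2 := by
    show beBoundary X 1 _ = 0
    rw [bound_lift2, hz, map_zero]
  refine ⟨QuotientAddGroup.mk ⟨_, hw⟩, ?_⟩
  show QuotientAddGroup.mk' _ (cycMap X ⟨_, hw⟩) = QuotientAddGroup.mk zc
  rw [QuotientAddGroup.mk'_apply]
  refine congrArg _ (Subtype.ext ?_)
  show FreeAbelianGroup.map (pObj X 2) (FreeAbelianGroup.map (lift2 X) zc.1) = zc.1
  rw [← FreeAbelianGroup.map_comp_apply]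
  have hid : pObj X 2 ∘ lift2 X = id := funext (pObj_lift2 X)
  rw [hid, FreeAbelianGroup.map_id_apply]
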